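/- In the setting of the interface localization (diffuse interface within distance C'R₀^β of the triod T_{ABC}, and exponential decay |u(z) − a_i| ≤ K exp(−k(dist(z,∂𝒟_i) − C'R₀^β)⁺) on each region 𝒟_i), define the rescalings u_{R₀}(z) := u(R₀z) for z ∈ B̄₁, 𝒟^i_{R₀} := {z ∈ B₁ : R₀z ∈ 𝒟_i}, and the approximate triple junction map U_{R₀} := a₁χ_{𝒟¹_{R₀}} + a₂χ_{𝒟²_{R₀}} + a₃χ_{𝒟³_{R₀}} on B₁. Then there exists a constant C₁ depending only on W such that ∫_{B₁} |u_{R₀}(z) − U_{R₀}(z)| dz ≤ C₁ R₀^{β−1}. -/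

import Mathlib

open MeasureTheory Metric Filter
open scoped RealInnerProductSpace

noncomputable section

/-- Squared Euclidean norm of the full gradient of `u : ℂ → ℂ`
(`|∇u|² = |∂_x u|² + |∂_y u|²`). -/
def gradSq (u : ℂ → ℂ) (z : ℂ) : ℝ :=
  ‖fderiv ℝ u z 1‖ ^ 2 + ‖fderiv ℝ u z Complex.I‖ ^ 2

/-- The Allen–Cahn energy `E(u,Ω) = ∫_Ω (½|∇u|² + W(u))`. -/
def energy (W : ℂ → ℝ) (u : ℂ → ℂ) (Ω : Set ℂ) : ℝ :=
  ∫ z in Ω, ((1 / 2) * gradSq u z + W (u z))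

/-- Minimizing solution in the sense of De Giorgi. -/
def IsMinimizingSolution (W : ℂ → ℝ) (u : ℂ → ℂ) : Prop :=
  ∀ Ω : Set ℂ, IsOpen Ω → Bornology.IsBounded Ω →
    ∀ v : ℂ → ℂ, ContDiff ℝ 1 v → HasCompactSupport v → tsupport v ⊆ Ω →
      energy W u Ω ≤ energy W (u + v) Ω

/-- Hypothesis (H1) on the triple-well potential. -/
structure H1 (W : ℂ → ℝ) (a : Fin 3 → ℂ) (M c₁ c₂ : ℝ) : Prop where
  smooth : ContDiff ℝ 2 W
  nonneg : ∀ z, 0 ≤ W z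
  zeroSet : ∀ z, W z = 0 ↔ ∃ i, z = a i
  inj : Function.Injective a
  coercive : ∀ z : ℂ, M < ‖z‖ → 0 < ⟪gradient W z, z⟫
  c₁pos : 0 < c₁
  c₁lt : c₁ < c₂
  hessLower : ∀ (i : Fin 3) (ξ : ℂ), c₁ * ‖ξ‖ ^ 2 ≤ iteratedFDeriv ℝ 2 W (a i) ![ξ, ξ]
  hessUpper : ∀ (i : Fin 3) (ξ : ℂ), iteratedFDeriv ℝ 2 W (a i) ![ξ, ξ] ≤ c₂ * ‖ξ‖ ^ 2

/-- The 1D action of a path. -/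
def action1D (W : ℂ → ℝ) (U : ℝ → ℂ) : ℝ :=
  ∫ t : ℝ, ((1 / 2) * ‖deriv U t‖ ^ 2 + W (U t))

/-- Actions of 1D connections between two wells. -/
def connectionActions (W : ℂ → ℝ) (p q : ℂ) : Set ℝ :=
  {e | ∃ U : ℝ → ℂ, Differentiable ℝ U ∧
    Tendsto U atBot (nhds p) ∧ Tendsto U atTop (nhds q) ∧ e = action1D W U}

/-- Hypothesis (H2): all connection actions are minimized, with common minimal value `σ`. -/
structure H2 (W : ℂ → ℝ) (a : Fin 3 → ℂ) (σ : ℝ) : Prop where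
  pos : 0 < σ
  least : ∀ i j : Fin 3, i ≠ j → IsLeast (connectionActions W (a i) (a j)) σ

/-- The constants `δ_W, c_W, C_W` from the potential estimate near the wells. -/
structure WellConstants (W : ℂ → ℝ) (a : Fin 3 → ℂ) (δW cW CW : ℝ) : Prop where
  δWpos : 0 < δW
  cWpos : 0 < cW
  cWle : cW ≤ CW
  near : ∀ (i : Fin 3) (u : ℂ), ‖u - a i‖ < δW →
    (1 / 2) * cW * ‖u - a i‖ ^ 2 ≤ W u ∧ W u ≤ (1 / 2) * CW * ‖u - a i‖ ^ 2
  far : ∀ (δ : ℝ) (u : ℂ), 0 ≤ δ → δ < δW → (∀ i : Fin 3, δ ≤ ‖u - a i‖) →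
    (1 / 2) * cW * δ ^ 2 ≤ W u

/-- Line energy (tangential Dirichlet part plus potential, with respect to arclength)
of `u` along the part of the circle of radius `R` parametrized by angles in `s`. -/
def circleEnergyOn (W : ℂ → ℝ) (u : ℂ → ℂ) (R : ℝ) (s : Set ℝ) : ℝ :=
  ∫ θ in s, ((1 / (2 * R)) * ‖deriv (fun t => u (circleMap 0 R t)) θ‖ ^ 2
    + R * W (u (circleMap 0 R θ)))

/-- Total line energy `∫_{∂B_R} (½|∂_T u|² + W(u)) dH¹` along the circle of radius `R`. -/
def circleEnergy (W : ℂ → ℝ) (u : ℂ → ℂ) (R : ℝ) : ℝ :=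
  circleEnergyOn W u R (Set.Ico 0 (2 * Real.pi))

/-- `u` minimizes the energy on `Ω` among (continuous) competitors with its own
boundary values. -/
def MinimizesWithBV (W : ℂ → ℝ) (u : ℂ → ℂ) (Ω : Set ℂ) : Prop :=
  ∀ v : ℂ → ℂ, Continuous v → (∀ z ∉ Ω, v z = u z) → energy W u Ω ≤ energy W v Ω

/-- An open sector with vertex `p` and aperture angles `(θ₁, θ₂)`. -/
def Sector (p : ℂ) (θ₁ θ₂ : ℝ) : Set ℂ :=
  {z | ∃ r θ : ℝ, 0 < r ∧ θ₁ < θ ∧ θ < θ₂ ∧ z = p + r * Complex.exp (θ * Complex.I)}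

/-- A triple junction map centered at `p`: equal to `a k` on the three open sectors with
vertex `p` and opening angle `2π/3`. -/
def IsTripleJunctionMap (a : Fin 3 → ℂ) (p : ℂ) (u₀ : ℂ → ℂ) : Prop :=
  ∃ φ : ℝ, ∀ k : Fin 3,
    ∀ z ∈ Sector p (φ + 2 * Real.pi * ((k : ℕ) : ℝ) / 3)
        (φ + 2 * Real.pi * (((k : ℕ) : ℝ) + 1) / 3),
      u₀ z = a k

/-- The standing setting: a bounded minimizing solution with energy pinching at scale `R₀`. -/
structure Standing (W : ℂ → ℝ) (a : Fin 3 → ℂ) (σ M ε R₀ : ℝ) (u : ℂ → ℂ) : Prop where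
  minimizing : IsMinimizingSolution W u
  diff : Differentiable ℝ u
  bound : ∀ z, ‖u z‖ + Real.sqrt (gradSq u z) ≤ M
  Rpos : 0 < R₀
  circle_lb : 3 * σ - ε ≤ circleEnergy W u R₀
  circle_ub : circleEnergy W u R₀ ≤ 3 * σ + ε
  bulk_lb : 3 * σ - ε ≤ energy W u (Metric.ball 0 R₀) / R₀
  bulk_ub : energy W u (Metric.ball 0 R₀) / R₀ ≤ 3 * σ + ε

/-- The arc structure on `∂B_{R₀}`: three well arcs `I₁`, `I₂`, `I₃` given in angles by
`[t0,t1]`, `[t2,t3]`, `[t4,t5]`, separated by the transition arcs `I₁₂ = [t1,t2]`,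
`I₂₃ = [t3,t4]`, `I₃₁ = [t5, t0+2π]`. -/
structure ArcSetup (a : Fin 3 → ℂ) (δ C₁ C₂ R₀ : ℝ) (u : ℂ → ℂ)
    (t0 t1 t2 t3 t4 t5 : ℝ) : Prop where
  h01 : t0 < t1
  h12 : t1 < t2
  h23 : t2 < t3
  h34 : t3 < t4
  h45 : t4 < t5
  h50 : t5 < t0 + 2 * Real.pi
  end0l : ‖u (circleMap 0 R₀ t0) - a 0‖ ≤ δ
  end0r : ‖u (circleMap 0 R₀ t1) - a 0‖ ≤ δ
  end1l : ‖u (circleMap 0 R₀ t2) - a 1‖ ≤ δ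
  end1r : ‖u (circleMap 0 R₀ t3) - a 1‖ ≤ δ
  end2l : ‖u (circleMap 0 R₀ t4) - a 2‖ ≤ δ
  end2r : ‖u (circleMap 0 R₀ t5) - a 2‖ ≤ δ
  phase0 : ∀ s ∈ Set.Icc t0 t1, ∀ j : Fin 3, j ≠ 0 → δ < ‖u (circleMap 0 R₀ s) - a j‖
  phase1 : ∀ s ∈ Set.Icc t2 t3, ∀ j : Fin 3, j ≠ 1 → δ < ‖u (circleMap 0 R₀ s) - a j‖
  phase2 : ∀ s ∈ Set.Icc t4 t5, ∀ j : Fin 3, j ≠ 2 → δ < ‖u (circleMap 0 R₀ s) - a j‖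
  trans01 : ∀ s ∈ Set.Icc t1 t2, ∀ j : Fin 3, δ < ‖u (circleMap 0 R₀ s) - a j‖
  trans12 : ∀ s ∈ Set.Icc t3 t4, ∀ j : Fin 3, δ < ‖u (circleMap 0 R₀ s) - a j‖
  trans20 : ∀ s ∈ Set.Icc t5 (t0 + 2 * Real.pi), ∀ j : Fin 3, δ < ‖u (circleMap 0 R₀ s) - a j‖
  meas_lb : C₁ ≤ R₀ * ((t2 - t1) + (t4 - t3) + (t0 + 2 * Real.pi - t5))
  meas_ub : R₀ * ((t2 - t1) + (t4 - t3) + (t0 + 2 * Real.pi - t5)) ≤ C₂ / δ ^ 2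

/-- Midpoint of the arc with angles `θ₁ ≤ θ₂` on the circle of radius `R`. -/
def midpt (R θ₁ θ₂ : ℝ) : ℂ := circleMap 0 R ((θ₁ + θ₂) / 2)

/-- `D` minimizes the total distance to `A`, `B`, `C` over the closed disk of radius `R`. -/
def IsFermatPoint (R : ℝ) (A B C D : ℂ) : Prop :=
  D ∈ Metric.closedBall (0 : ℂ) R ∧
    ∀ P ∈ Metric.closedBall (0 : ℂ) R,
      dist D A + dist D B + dist D C ≤ dist P A + dist P B + dist P C

/-- The tangential derivative of `u` at `z` (along the circle centered at the origin
through `z`). -/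
def tangentialDeriv (u : ℂ → ℂ) (z : ℂ) : ℂ :=
  if z = 0 then 0 else ‖z‖⁻¹ • fderiv ℝ u z (Complex.I * z)

/-- Planar cross product of two vectors. -/
def cross2 (w v : ℂ) : ℝ := w.re * v.im - w.im * v.re


section AuxStmt16
open Set
open scoped ENNReal NNReal Pointwise


lemma seg_compact (p q : ℂ) : IsCompact (segment ℝ p q) := by
  rw [segment_eq_image']
  exact (isCompact_Icc.image (by continuity))

lemma seg_null (p q : ℂ) : volume (segment ℝ p q) = 0 := by
  rcases eq_or_ne p q with h | h
  · rw [h, segment_same]; exact measure_singleton q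
  · refine measure_mono_null ?_ (MeasureTheory.Measure.addHaar_affineSubspace volume
      (affineSpan ℝ ({p, q} : Set ℂ)) ?_)
    · rw [← convexHull_pair]; exact convexHull_subset_affineSpan _
    · intro htop
      have h1 : Collinear ℝ ({p, q} : Set ℂ) := collinear_pair ℝ p q
      have h2 := h1.finrank_le_one
      rw [← direction_affineSpan, htop, AffineSubspace.direction_top] at h2
      rw [finrank_top] at h2
      rw [Complex.finrank_real_complex] at h2
      omega

lemma tube_vol (p q : ℂ) (t : ℝ) (ht : 0 ≤ t) :
    volume {z : ℂ | Metric.infDist z (segment ℝ p q) ≤ t} ≤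
      ENNReal.ofReal ((dist p q + 2 * t) * (2 * t)) := by
  rcases eq_or_ne p q with h | h
  · subst h
    have hset : {z : ℂ | Metric.infDist z (segment ℝ p p) ≤ t} = Metric.closedBall p t := by
      ext z
      simp [segment_same, Metric.infDist_singleton, Metric.mem_closedBall]
    rw [hset, Complex.volume_closedBall, dist_self]
    have h4 : (NNReal.pi : ℝ≥0∞) ≤ ENNReal.ofReal 4 := by
      rw [← ENNReal.ofReal_coe_nnreal]
      exact ENNReal.ofReal_le_ofReal (by rw [NNReal.coe_real_pi]; exact Real.pi_le_four)
    calc ENNReal.ofReal t ^ 2 * NNReal.pi ≤ ENNReal.ofReal (t ^ 2) * ENNReal.ofReal 4 := by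
          rw [ENNReal.ofReal_pow ht]
          gcongr
      _ = ENNReal.ofReal (t ^ 2 * 4) := (ENNReal.ofReal_mul (by positivity)).symm
      _ ≤ ENNReal.ofReal ((0 + 2 * t) * (2 * t)) := by
          apply ENNReal.ofReal_le_ofReal; nlinarith
  · have hqp : q - p ≠ 0 := sub_ne_zero.mpr (Ne.symm h)
    have hnqp : (0:ℝ) < ‖q - p‖ := norm_pos_iff.mpr hqp
    set e : ℂ := (q - p) / ((‖q - p‖ : ℝ) : ℂ) with he
    have hne : ‖e‖ = 1 := by
      rw [he, norm_div, Complex.norm_real]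
      simp only [norm_norm]
      exact div_self hnqp.ne'
    have he0 : e ≠ 0 := by
      intro h0; rw [h0, norm_zero] at hne; norm_num at hne
    have heinv : ‖e⁻¹‖ = 1 := by rw [norm_inv, hne]; norm_num
    have hinvqp : e⁻¹ * (q - p) = ((‖q - p‖ : ℝ) : ℂ) := by
      rw [he]; field_simp
    set L := dist p q with hL
    have hLnorm : L = ‖q - p‖ := by rw [hL, dist_eq_norm, norm_sub_rev]
    set Rect : Set ℂ := Complex.measurableEquivRealProd ⁻¹'
      ((Set.Icc (-t) (L + t)) ×ˢ (Set.Icc (-t) t)) with hRect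
    have hsub : {z : ℂ | Metric.infDist z (segment ℝ p q) ≤ t} ⊆
        (fun z : ℂ => e⁻¹ * (z - p)) ⁻¹' Rect := by
      intro z hz
      obtain ⟨w, hw, hdw⟩ := (seg_compact p q).exists_infDist_eq_dist
        ⟨p, left_mem_segment ℝ p q⟩ z
      have hdzw : dist z w ≤ t := by rw [← hdw]; exact hz
      rw [segment_eq_image'] at hw
      obtain ⟨θ, hθ, hwθ⟩ := hw
      have hkey : e⁻¹ * (z - p) = ((θ * ‖q - p‖ : ℝ) : ℂ) + e⁻¹ * (z - w) := by
        have hwp : w - p = (θ : ℂ) * (q - p) := by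
          rw [← hwθ]; push_cast; rw [Complex.real_smul]; ring
        have : z - p = (w - p) + (z - w) := by ring
        rw [this, mul_add, hwp]
        push_cast
        rw [show e⁻¹ * ((θ:ℂ) * (q - p)) = (θ:ℂ) * (e⁻¹ * (q - p)) by ring, hinvqp]
      set η := e⁻¹ * (z - w) with hη
      have hηnorm : ‖η‖ ≤ t := by
        rw [hη, norm_mul, heinv, one_mul, ← dist_eq_norm]
        exact hdzw
      have hre : |η.re| ≤ t := le_trans (Complex.abs_re_le_norm η)
        hηnorm
      have him : |η.im| ≤ t := le_trans (Complex.abs_im_le_norm η)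
        hηnorm
      have hθL0 : 0 ≤ θ * ‖q - p‖ := mul_nonneg hθ.1 hnqp.le
      have hθL1 : θ * ‖q - p‖ ≤ L := by
        rw [hLnorm]; nlinarith [hθ.2]
      simp only [Rect, Set.mem_preimage, Complex.measurableEquivRealProd_apply,
        Set.mem_prod, Set.mem_Icc, hkey]
      constructor
      · simp only [Complex.add_re, Complex.ofReal_re]
        constructor
        · have := abs_le.mp hre; linarith [this.1]
        · have := abs_le.mp hre; linarith [this.2]
      · simp only [Complex.add_im, Complex.ofReal_im, zero_add]
        exact abs_le.mp him
    have hRectMeas : MeasurableSet Rect :=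
      Complex.measurableEquivRealProd.measurable (measurableSet_Icc.prod measurableSet_Icc)
    have hRectVol : volume Rect = ENNReal.ofReal (L + 2 * t) * ENNReal.ofReal (2 * t) := by
      rw [hRect, Complex.volume_preserving_equiv_real_prod.measure_preimage
        (measurableSet_Icc.prod measurableSet_Icc).nullMeasurableSet]
      rw [MeasureTheory.Measure.volume_eq_prod, MeasureTheory.Measure.prod_prod,
        Real.volume_Icc, Real.volume_Icc]
      congr 2 <;> ring
    calc volume {z : ℂ | Metric.infDist z (segment ℝ p q) ≤ t}
        ≤ volume ((fun z : ℂ => e⁻¹ * (z - p)) ⁻¹' Rect) := measure_mono hsub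
      _ = volume Rect := by
          have h1 : (fun z : ℂ => e⁻¹ * (z - p)) =
              (fun w : ℂ => e⁻¹ * w) ∘ (fun z : ℂ => z + (-p)) := by
            funext z; simp [sub_eq_add_neg]
          rw [h1, Set.preimage_comp]
          rw [measure_preimage_add_right volume (-p) _]
          have ha : e⁻¹ ∈ Metric.sphere (0:ℂ) 1 := by
            rw [mem_sphere_zero_iff_norm]; exact heinv
          have h2 : (fun w : ℂ => e⁻¹ * w) = (rotation ⟨e⁻¹, ha⟩ : ℂ → ℂ) := by
            funext w; exact (rotation_apply ⟨e⁻¹, ha⟩ w).symm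
          rw [h2]
          exact ((rotation ⟨e⁻¹, ha⟩).measurePreserving).measure_preimage
            hRectMeas.nullMeasurableSet
      _ = ENNReal.ofReal (L + 2 * t) * ENNReal.ofReal (2 * t) := hRectVol
      _ = ENNReal.ofReal ((dist p q + 2 * t) * (2 * t)) := by
          rw [← ENNReal.ofReal_mul (by positivity), hL]

lemma seg_piece (R₀ t : ℝ) (hR : 1 ≤ R₀) (ht : 0 ≤ t) (p q : ℂ)
    (hp : ‖p‖ ≤ R₀ + R₀) (hq : ‖q‖ ≤ R₀ + R₀) :
    volume {z : ℂ | z ∈ ball (0:ℂ) 1 ∧ Metric.infDist (R₀ • z) (segment ℝ p q) ≤ t} ≤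
      ENNReal.ofReal ((4 + 2 * (t / R₀)) * (2 * (t / R₀))) := by
  have hR0 : (0:ℝ) < R₀ := lt_of_lt_of_le zero_lt_one hR
  have hsub : {z : ℂ | z ∈ ball (0:ℂ) 1 ∧ Metric.infDist (R₀ • z) (segment ℝ p q) ≤ t} ⊆
      {z : ℂ | Metric.infDist z (segment ℝ (R₀⁻¹ • p) (R₀⁻¹ • q)) ≤ t / R₀} := by
    rintro z ⟨-, hz⟩
    obtain ⟨w, hw, hdw⟩ := (seg_compact p q).exists_infDist_eq_dist
      ⟨p, left_mem_segment ℝ p q⟩ (R₀ • z)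
    have hdzw : dist (R₀ • z) w ≤ t := by rw [← hdw]; exact hz
    have hwmem : R₀⁻¹ • w ∈ segment ℝ (R₀⁻¹ • p) (R₀⁻¹ • q) := by
      rw [segment_eq_image'] at hw ⊢
      obtain ⟨θ, hθ, hwθ⟩ := hw
      exact ⟨θ, hθ, by rw [← hwθ]; simp [smul_add, smul_sub, smul_comm]; ring⟩
    have key : R₀ * dist z (R₀⁻¹ • w) = dist (R₀ • z) w := by
      calc R₀ * dist z (R₀⁻¹ • w) = ‖R₀ • (z - R₀⁻¹ • w)‖ := by
            rw [norm_smul, Real.norm_eq_abs, abs_of_pos hR0, dist_eq_norm]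
        _ = dist (R₀ • z) w := by
            rw [smul_sub, smul_inv_smul₀ hR0.ne', dist_eq_norm]
    have : dist z (R₀⁻¹ • w) ≤ t / R₀ := by
      rw [le_div_iff₀ hR0]
      nlinarith [key, hdzw, dist_nonneg (x := z) (y := R₀⁻¹ • w)]
    exact le_trans (Metric.infDist_le_dist_of_mem hwmem) this
  refine le_trans (measure_mono hsub) (le_trans (tube_vol _ _ _ (by positivity)) ?_)
  apply ENNReal.ofReal_le_ofReal
  have hd : dist (R₀⁻¹ • p) (R₀⁻¹ • q) ≤ 4 := by
    rw [dist_smul₀]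
    have : dist p q ≤ ‖p‖ + ‖q‖ := by
      rw [dist_eq_norm]
      exact le_trans (norm_sub_le p q) (by linarith)
    have h4 : dist p q ≤ 4 * R₀ := by linarith
    rw [norm_inv, Real.norm_eq_abs, abs_of_pos hR0]
    rw [inv_mul_le_iff₀ hR0]
    linarith
  have htR : 0 ≤ t / R₀ := by positivity
  nlinarith

lemma vol_ball_c (r : ℝ) (hr : 0 ≤ r) :
    volume (ball (0:ℂ) r) = ENNReal.ofReal (r ^ 2 * Real.pi) := by
  rw [Complex.volume_ball, ← NNReal.coe_real_pi, ENNReal.ofReal_mul (by positivity),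
    ENNReal.ofReal_coe_nnreal, ENNReal.ofReal_pow hr]

lemma ann_piece (R₀ t : ℝ) (hR : 1 ≤ R₀) (ht : 0 ≤ t) :
    volume {z : ℂ | z ∈ ball (0:ℂ) 1 ∧ Metric.infDist (R₀ • z) (sphere (0:ℂ) R₀) ≤ t} ≤
      ENNReal.ofReal (2 * Real.pi * (t / R₀)) := by
  have hR0 : (0:ℝ) < R₀ := lt_of_lt_of_le zero_lt_one hR
  set s : ℝ := t / R₀ with hs
  have hs0 : 0 ≤ s := by positivity
  set r₀ : ℝ := max (1 - s) 0 with hr₀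
  have hr₀0 : 0 ≤ r₀ := le_max_right _ _
  have hr₀1 : r₀ ≤ 1 := by
    apply max_le _ zero_le_one; linarith
  have hsub : {z : ℂ | z ∈ ball (0:ℂ) 1 ∧ Metric.infDist (R₀ • z) (sphere (0:ℂ) R₀) ≤ t} ⊆
      ball (0:ℂ) 1 \ ball (0:ℂ) r₀ := by
    rintro z ⟨hz1, hz2⟩
    refine ⟨hz1, fun hz3 => ?_⟩
    obtain ⟨w, hw, hdw⟩ := (isCompact_sphere (0:ℂ) R₀).exists_infDist_eq_dist
      (NormedSpace.sphere_nonempty.mpr hR0.le) (R₀ • z)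
    have hdzw : dist (R₀ • z) w ≤ t := by rw [← hdw]; exact hz2
    rw [mem_sphere_zero_iff_norm] at hw
    have hlow : R₀ - R₀ * ‖z‖ ≤ t := by
      have h1 : |‖R₀ • z‖ - ‖w‖| ≤ ‖R₀ • z - w‖ := abs_norm_sub_norm_le _ _
      rw [hw, ← dist_eq_norm] at h1
      have h2 : ‖R₀ • z‖ = R₀ * ‖z‖ := by
        rw [norm_smul, Real.norm_eq_abs, abs_of_pos hR0]
      have := abs_le.mp (le_trans h1 hdzw)
      linarith [this.1]
    have hznorm : ‖z‖ < r₀ := mem_ball_zero_iff.mp hz3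
    have : 1 - s ≤ ‖z‖ := by
      have hts : s * R₀ = t := by rw [hs]; field_simp
      nlinarith [hlow, norm_nonneg z]
    have : r₀ ≤ ‖z‖ := by
      apply max_le this (norm_nonneg z)
    linarith
  refine le_trans (measure_mono hsub) ?_
  have hdiff : volume (ball (0:ℂ) 1 \ ball (0:ℂ) r₀) =
      volume (ball (0:ℂ) 1) - volume (ball (0:ℂ) r₀) := by
    apply measure_diff (ball_subset_ball hr₀1) measurableSet_ball.nullMeasurableSet
      measure_ball_lt_top.ne
  rw [hdiff, vol_ball_c 1 zero_le_one, vol_ball_c r₀ hr₀0,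
    ← ENNReal.ofReal_sub _ (by positivity : (0:ℝ) ≤ r₀ ^ 2 * Real.pi)]
  apply ENNReal.ofReal_le_ofReal
  rcases le_or_gt s 1 with hcase | hcase
  · have : r₀ = 1 - s := max_eq_left (by linarith)
    rw [this]
    nlinarith [Real.pi_pos, mul_nonneg (sq_nonneg s) Real.pi_pos.le]
  · have : r₀ = 0 := max_eq_right (by linarith)
    rw [this]
    nlinarith [Real.pi_pos]

lemma tail_bound (c β : ℝ) (hc : 0 < c) (hβ0 : 0 < β) (hβ1 : β < 1) :
    ∃ Ct : ℝ, 0 ≤ Ct ∧ ∀ R : ℝ, 1 ≤ R →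
      Real.exp (-(c * R ^ β)) ≤ Ct * R ^ (β - 1) := by
  set n : ℕ := max 1 ⌈1 / β⌉₊ with hn
  have hn1 : 1 ≤ n := le_max_left _ _
  have hnβ : 1 ≤ β * n := by
    have h1 : (1:ℝ) / β ≤ (⌈1 / β⌉₊ : ℝ) := Nat.le_ceil _
    have h2 : ((⌈1 / β⌉₊ : ℕ) : ℝ) ≤ (n : ℝ) := by
      exact_mod_cast le_max_right 1 ⌈1 / β⌉₊
    have := le_trans h1 h2
    rw [div_le_iff₀ hβ0] at this
    nlinarith
  refine ⟨((n : ℝ) / c) ^ n, by positivity, fun R hR => ?_⟩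
  have hR0 : (0:ℝ) < R := lt_of_lt_of_le zero_lt_one hR
  set s : ℝ := R ^ β with hs
  have hs1 : 1 ≤ s := by
    rw [hs, show (1:ℝ) = R ^ (0:ℝ) from (Real.rpow_zero R).symm]
    exact Real.rpow_le_rpow_of_exponent_le hR hβ0.le
  have hs0 : 0 < s := lt_of_lt_of_le zero_lt_one hs1
  -- R ≤ s ^ n
  have hRs : R ≤ s ^ n := by
    have h1 : R = R ^ (1:ℝ) := (Real.rpow_one R).symm
    have h2 : R ^ (1:ℝ) ≤ R ^ (β * n) := Real.rpow_le_rpow_of_exponent_le hR hnβ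
    have h3 : R ^ (β * n) = (R ^ β) ^ (n:ℝ) := Real.rpow_mul hR0.le β n ▸ rfl
    rw [h1]
    refine le_trans h2 ?_
    rw [Real.rpow_mul hR0.le, Real.rpow_natCast]
  -- s ^ n ≤ (n / c)^n * exp (c * s)
  have hsn : s ^ n ≤ ((n:ℝ) / c) ^ n * Real.exp (c * s) := by
    have hn0 : (0:ℝ) < n := by exact_mod_cast hn1
    have h1 : c * s / n ≤ Real.exp (c * s / n) := by
      have := Real.add_one_le_exp (c * s / n)
      have hpos : 0 ≤ c * s / n := by positivity
      linarith
    have h2 : (c * s / n) ^ n ≤ Real.exp (c * s / n) ^ n :=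
      pow_le_pow_left₀ (by positivity) h1 n
    have h3 : Real.exp (c * s / n) ^ n = Real.exp (c * s) := by
      rw [← Real.exp_nat_mul]
      congr 1
      rw [mul_comm, div_mul_cancel₀ _ hn0.ne']
    rw [h3] at h2
    have h4 : ((n:ℝ) / c) ^ n * (c * s / n) ^ n = s ^ n := by
      rw [← mul_pow]
      congr 1
      field_simp
    calc s ^ n = ((n:ℝ) / c) ^ n * (c * s / n) ^ n := h4.symm
      _ ≤ ((n:ℝ) / c) ^ n * Real.exp (c * s) := by
          apply mul_le_mul_of_nonneg_left h2 (by positivity)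
  -- conclude
  have hkey : Real.exp (-(c * s)) * R ≤ ((n:ℝ)/c) ^ n * s := by
    have h5 : Real.exp (-(c * s)) * R ≤ Real.exp (-(c * s)) * s ^ n :=
      mul_le_mul_of_nonneg_left hRs (Real.exp_nonneg _)
    have h6 : Real.exp (-(c * s)) * s ^ n ≤
        Real.exp (-(c * s)) * (((n:ℝ)/c) ^ n * Real.exp (c * s)) :=
      mul_le_mul_of_nonneg_left hsn (Real.exp_nonneg _)
    have h7 : Real.exp (-(c * s)) * (((n:ℝ)/c) ^ n * Real.exp (c * s)) = ((n:ℝ)/c) ^ n := by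
      rw [show Real.exp (-(c*s)) * (((n:ℝ)/c) ^ n * Real.exp (c*s)) =
        ((n:ℝ)/c) ^ n * (Real.exp (-(c*s)) * Real.exp (c*s)) by ring,
        ← Real.exp_add]
      simp
    have h8 : ((n:ℝ)/c) ^ n ≤ ((n:ℝ)/c) ^ n * s := by
      nlinarith [pow_nonneg (by positivity : (0:ℝ) ≤ (n:ℝ)/c) n]
    linarith
  have hrw : R ^ (β - 1) = s / R := by
    rw [hs, Real.rpow_sub hR0, Real.rpow_one]
  rw [hrw]
  rw [show ((n:ℝ)/c) ^ n * (s / R) = (((n:ℝ)/c) ^ n * s) / R by ring]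
  rw [le_div_iff₀ hR0]
  exact hkey

end AuxStmt16

set_option maxHeartbeats 1000000 in
open scoped Pointwise in
/-- `L¹`-closeness on the unit disk between the rescaling
`u_{R₀}(z) = u(R₀ z)` and the approximate triple junction map
`U_{R₀} = Σ_i a_i χ_{𝒟ⁱ_{R₀}}` determined by the triod `T_{ABC}`:
`∫_{B₁} |u_{R₀} - U_{R₀}| ≤ C₁ R₀^{β-1}`. -/
theorem statement16 (W : ℂ → ℝ) (a : Fin 3 → ℂ) (M c₁ c₂ K k C' β : ℝ)
    (hW : H1 W a M c₁ c₂) (hK : 0 < K) (hk : 0 < k) (hC' : 0 < C')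
    (hβ0 : 0 < β) (hβ1 : β < 1) :
    ∃ C₁ : ℝ, ∀ R₀ : ℝ, 1 ≤ R₀ →
      ∀ u : ℂ → ℂ, Differentiable ℝ u →
        (∀ z : ℂ, ‖u z‖ + Real.sqrt (gradSq u z) ≤ M) →
        ∀ (D A B C3 : ℂ) (𝒟 : Fin 3 → Set ℂ),
          ‖D‖ ≤ R₀ / 100 →
          A ∈ sphere (0 : ℂ) R₀ → B ∈ sphere (0 : ℂ) R₀ → C3 ∈ sphere (0 : ℂ) R₀ →
          (Pairwise fun i j => Disjoint (𝒟 i) (𝒟 j)) →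
          (⋃ i, 𝒟 i) =
            ball (0 : ℂ) R₀ \ (segment ℝ D A ∪ segment ℝ D B ∪ segment ℝ D C3) →
          (∀ i, frontier (𝒟 i) ⊆
            segment ℝ D A ∪ segment ℝ D B ∪ segment ℝ D C3 ∪ sphere (0 : ℂ) R₀) →
          (∀ i : Fin 3, ∀ z ∈ 𝒟 i,
            ‖u z - a i‖ ≤
              K * Real.exp (-k * max (Metric.infDist z (frontier (𝒟 i)) - C' * R₀ ^ β) 0)) →
          (∫ z in ball (0 : ℂ) 1,
              ‖u (R₀ • z) - ∑ i : Fin 3,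
                Set.indicator {w : ℂ | R₀ • w ∈ 𝒟 i} (fun _ => a i) z‖) ≤
            C₁ * R₀ ^ (β - 1) := by
  obtain ⟨Ct, hCt0, hCt⟩ := tail_bound (k * C') β (by positivity) hβ0 hβ1
  set Ce : ℝ := 3 * ((4 + 2 * (2 * C')) * (2 * (2 * C'))) + 2 * Real.pi * (2 * C') with hCe
  have hCe0 : 0 ≤ Ce := by positivity
  refine ⟨K * Ce + Real.pi * (K * Ct), ?_⟩
  intro R₀ hR u hu hbound D A B C3 𝒟 hD hA hB hC hdisj hUnion hfront hdecay
  have hR0 : (0:ℝ) < R₀ := lt_of_lt_of_le zero_lt_one hR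
  set x : ℝ := R₀ ^ (β - 1) with hxd
  have hx0 : (0:ℝ) < x := Real.rpow_pos_of_pos hR0 _
  have hx1 : x ≤ 1 := Real.rpow_le_one_of_one_le_of_nonpos hR (by linarith)
  have hRβ : (0:ℝ) < R₀ ^ β := Real.rpow_pos_of_pos hR0 _
  set t : ℝ := 2 * C' * R₀ ^ β with hts
  have ht0 : 0 ≤ t := by positivity
  have htr : t / R₀ = 2 * C' * x := by
    rw [hts, hxd, Real.rpow_sub hR0, Real.rpow_one]; ring
  set P : Set ℂ := segment ℝ D A ∪ segment ℝ D B ∪ segment ℝ D C3 with hP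
  set S : Set ℂ := P ∪ sphere (0:ℂ) R₀ with hS
  have hSne : S.Nonempty := ⟨D, Or.inl (Or.inl (Or.inl (left_mem_segment ℝ D A)))⟩
  set E : Set ℂ := ball (0:ℂ) 1 ∩ {z : ℂ | Metric.infDist (R₀ • z) S ≤ t} with hE
  have hEmeas : MeasurableSet E := by
    apply measurableSet_ball.inter
    have hcont : Continuous fun z : ℂ => Metric.infDist (R₀ • z) S :=
      (Metric.continuous_infDist_pt S).comp (continuous_const_smul R₀)
    exact measurableSet_le hcont.measurable measurable_const
  -- norms of triod points
  have hD2 : ‖D‖ ≤ R₀ + R₀ := by linarith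
  have hA2 : ‖A‖ ≤ R₀ + R₀ := by
    rw [mem_sphere_zero_iff_norm] at hA; linarith
  have hB2 : ‖B‖ ≤ R₀ + R₀ := by
    rw [mem_sphere_zero_iff_norm] at hB; linarith
  have hC2 : ‖C3‖ ≤ R₀ + R₀ := by
    rw [mem_sphere_zero_iff_norm] at hC; linarith
  -- volume of E
  have hvolE : (volume E).toReal ≤ Ce * x := by
    set F1 : Set ℂ := {z : ℂ | z ∈ ball (0:ℂ) 1 ∧
      Metric.infDist (R₀ • z) (segment ℝ D A) ≤ t} with hF1
    set F2 : Set ℂ := {z : ℂ | z ∈ ball (0:ℂ) 1 ∧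
      Metric.infDist (R₀ • z) (segment ℝ D B) ≤ t} with hF2
    set F3 : Set ℂ := {z : ℂ | z ∈ ball (0:ℂ) 1 ∧
      Metric.infDist (R₀ • z) (segment ℝ D C3) ≤ t} with hF3
    set F4 : Set ℂ := {z : ℂ | z ∈ ball (0:ℂ) 1 ∧
      Metric.infDist (R₀ • z) (sphere (0:ℂ) R₀) ≤ t} with hF4
    have hEsub : E ⊆ ((F1 ∪ F2) ∪ F3) ∪ F4 := by
      rintro z ⟨hz1, hz2⟩
      have hScompact : IsCompact S :=
        (((seg_compact D A).union (seg_compact D B)).union (seg_compact D C3)).union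
          (isCompact_sphere 0 R₀)
      obtain ⟨w, hw, hdw⟩ := hScompact.exists_infDist_eq_dist hSne (R₀ • z)
      have hd : dist (R₀ • z) w ≤ t := by rw [← hdw]; exact hz2
      rcases hw with ((h1 | h2) | h3) | h4
      · exact Or.inl (Or.inl (Or.inl
          ⟨hz1, le_trans (Metric.infDist_le_dist_of_mem h1) hd⟩))
      · exact Or.inl (Or.inl (Or.inr
          ⟨hz1, le_trans (Metric.infDist_le_dist_of_mem h2) hd⟩))
      · exact Or.inl (Or.inr
          ⟨hz1, le_trans (Metric.infDist_le_dist_of_mem h3) hd⟩)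
      · exact Or.inr ⟨hz1, le_trans (Metric.infDist_le_dist_of_mem h4) hd⟩
    have hb1 := seg_piece R₀ t hR ht0 D A hD2 hA2
    have hb2 := seg_piece R₀ t hR ht0 D B hD2 hB2
    have hb3 := seg_piece R₀ t hR ht0 D C3 hD2 hC2
    have hb4 := ann_piece R₀ t hR ht0
    have hseg_nonneg : (0:ℝ) ≤ (4 + 2 * (t / R₀)) * (2 * (t / R₀)) := by positivity
    have hle : volume E ≤ ENNReal.ofReal
        (3 * ((4 + 2 * (t / R₀)) * (2 * (t / R₀))) + 2 * Real.pi * (t / R₀)) := by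
      calc volume E ≤ volume (((F1 ∪ F2) ∪ F3) ∪ F4) := measure_mono hEsub
        _ ≤ volume ((F1 ∪ F2) ∪ F3) + volume F4 := measure_union_le _ _
        _ ≤ (volume (F1 ∪ F2) + volume F3) + volume F4 := by
            gcongr; exact measure_union_le _ _
        _ ≤ ((volume F1 + volume F2) + volume F3) + volume F4 := by
            gcongr; exact measure_union_le _ _
        _ ≤ ((ENNReal.ofReal ((4 + 2 * (t / R₀)) * (2 * (t / R₀))) +
              ENNReal.ofReal ((4 + 2 * (t / R₀)) * (2 * (t / R₀)))) +
              ENNReal.ofReal ((4 + 2 * (t / R₀)) * (2 * (t / R₀)))) +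
              ENNReal.ofReal (2 * Real.pi * (t / R₀)) := by
            gcongr
        _ = ENNReal.ofReal
            (3 * ((4 + 2 * (t / R₀)) * (2 * (t / R₀))) + 2 * Real.pi * (t / R₀)) := by
            rw [← ENNReal.ofReal_add hseg_nonneg hseg_nonneg,
              ← ENNReal.ofReal_add (by positivity) hseg_nonneg,
              ← ENNReal.ofReal_add (by positivity) (by positivity)]
            congr 1
            ring
    refine le_trans (ENNReal.toReal_le_of_le_ofReal (by positivity) hle) ?_
    rw [htr]
    rw [hCe]
    nlinarith [mul_nonneg (mul_nonneg hC'.le hC'.le)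
      (mul_nonneg hx0.le (sub_nonneg.mpr hx1))]
  -- the comparison function
  set c0 : ℝ := C' * R₀ ^ β with hc0
  set f : ℂ → ℝ := fun z =>
    E.indicator (fun _ => K) z + K * Real.exp (-(k * c0)) with hf
  have hconst_int : Integrable (fun _ : ℂ => K) (volume.restrict (ball (0:ℂ) 1)) :=
    integrableOn_const measure_ball_lt_top.ne
  have hconst_int2 : Integrable (fun _ : ℂ => K * Real.exp (-(k * c0)))
      (volume.restrict (ball (0:ℂ) 1)) :=
    integrableOn_const measure_ball_lt_top.ne
  have hfint : Integrable f (volume.restrict (ball (0:ℂ) 1)) :=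
    (hconst_int.indicator hEmeas).add hconst_int2
  -- the exceptional null set
  have hN : volume ((fun z : ℂ => R₀ • z) ⁻¹' P) = 0 := by
    have hPvol : volume P = 0 :=
      measure_union_null (measure_union_null (seg_null D A) (seg_null D B)) (seg_null D C3)
    have heq : (fun z : ℂ => R₀ • z) ⁻¹' P = R₀⁻¹ • P := by
      ext z
      rw [Set.mem_smul_set_iff_inv_smul_mem₀ (inv_ne_zero hR0.ne'), inv_inv]
      rfl
    rw [heq, MeasureTheory.Measure.addHaar_smul, hPvol, mul_zero]
  have hNrestrict : (volume.restrict (ball (0:ℂ) 1)) ((fun z : ℂ => R₀ • z) ⁻¹' P) = 0 :=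
    le_antisymm (le_trans (Measure.restrict_apply_le _ _) hN.le) (by simp)
  -- a.e. pointwise bound
  have hae : ∀ᵐ z ∂(volume.restrict (ball (0:ℂ) 1)),
      ‖u (R₀ • z) - ∑ i : Fin 3,
        Set.indicator {w : ℂ | R₀ • w ∈ 𝒟 i} (fun _ => a i) z‖ ≤ f z := by
    have h1 : ∀ᵐ z ∂(volume.restrict (ball (0:ℂ) 1)), z ∈ ball (0:ℂ) 1 :=
      ae_restrict_mem measurableSet_ball
    have h2 : ∀ᵐ z ∂(volume.restrict (ball (0:ℂ) 1)),
        z ∉ (fun z : ℂ => R₀ • z) ⁻¹' P :=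
      (MeasureTheory.measure_eq_zero_iff_ae_notMem).mp hNrestrict
    filter_upwards [h1, h2] with z hz1 hz2
    have hzball : R₀ • z ∈ ball (0:ℂ) R₀ := by
      rw [mem_ball_zero_iff] at hz1 ⊢
      rw [norm_smul, Real.norm_eq_abs, abs_of_pos hR0]
      nlinarith [norm_nonneg z]
    have hzD : R₀ • z ∈ ⋃ i, 𝒟 i := by
      rw [hUnion]; exact ⟨hzball, hz2⟩
    obtain ⟨i, hi⟩ := Set.mem_iUnion.mp hzD
    have hsum : ∑ j : Fin 3,
        Set.indicator {w : ℂ | R₀ • w ∈ 𝒟 j} (fun _ => a j) z = a i := by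
      rw [Finset.sum_eq_single i]
      · exact Set.indicator_of_mem (show z ∈ {w : ℂ | R₀ • w ∈ 𝒟 i} from hi) _
      · intro j _ hji
        apply Set.indicator_of_notMem
        exact fun hj =>
          (Set.disjoint_left.mp (hdisj hji) (show R₀ • z ∈ 𝒟 j from hj)) hi
      · intro h; exact absurd (Finset.mem_univ i) h
    rw [hsum]
    have hdec := hdecay i (R₀ • z) hi
    have hfr_ne : (frontier (𝒟 i)).Nonempty := by
      rw [nonempty_frontier_iff]
      refine ⟨⟨R₀ • z, hi⟩, fun htop => ?_⟩
      have hmem : ((R₀ + 1 : ℝ) : ℂ) ∈ 𝒟 i := htop ▸ Set.mem_univ _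
      have h3 : ((R₀ + 1 : ℝ) : ℂ) ∈ ⋃ j, 𝒟 j := Set.mem_iUnion.mpr ⟨i, hmem⟩
      rw [hUnion] at h3
      have h4 := h3.1
      rw [mem_ball_zero_iff, Complex.norm_real, Real.norm_eq_abs,
        abs_of_pos (by linarith : (0:ℝ) < R₀ + 1)] at h4
      linarith
    have hmono : Metric.infDist (R₀ • z) S ≤ Metric.infDist (R₀ • z) (frontier (𝒟 i)) :=
      Metric.infDist_le_infDist_of_subset (hfront i) hfr_ne
    by_cases hcase : z ∈ E
    · have hexp1 : Real.exp (-k * max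
          (Metric.infDist (R₀ • z) (frontier (𝒟 i)) - C' * R₀ ^ β) 0) ≤ 1 := by
        rw [Real.exp_le_one_iff]
        have := le_max_right
          (Metric.infDist (R₀ • z) (frontier (𝒟 i)) - C' * R₀ ^ β) (0:ℝ)
        nlinarith [hk.le, le_max_right
          (Metric.infDist (R₀ • z) (frontier (𝒟 i)) - C' * R₀ ^ β) (0:ℝ)]
      have h3 : ‖u (R₀ • z) - a i‖ ≤ K := by
        refine le_trans hdec ?_
        nlinarith [hK.le]
      have hfz : f z = K + K * Real.exp (-(k * c0)) := by
        simp only [hf, Set.indicator_of_mem hcase]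
      rw [hfz]
      have : 0 ≤ K * Real.exp (-(k * c0)) := by positivity
      linarith
    · have hgt : t < Metric.infDist (R₀ • z) S := by
        by_contra hle
        push_neg at hle
        exact hcase ⟨hz1, hle⟩
      have hmax : c0 ≤ max
          (Metric.infDist (R₀ • z) (frontier (𝒟 i)) - C' * R₀ ^ β) 0 := by
        refine le_max_of_le_left ?_
        have h2c : t = c0 + c0 := by rw [hts, hc0]; ring
        linarith
      have hexp : Real.exp (-k * max
          (Metric.infDist (R₀ • z) (frontier (𝒟 i)) - C' * R₀ ^ β) 0) ≤
          Real.exp (-(k * c0)) := by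
        apply Real.exp_le_exp.mpr
        have := mul_le_mul_of_nonneg_left hmax hk.le
        linarith
      have hfz : f z = 0 + K * Real.exp (-(k * c0)) := by
        simp only [hf, Set.indicator_of_notMem hcase]
      rw [hfz, zero_add]
      exact le_trans hdec (mul_le_mul_of_nonneg_left hexp hK.le)
  -- integrate
  have hint : (∫ z in ball (0:ℂ) 1,
      ‖u (R₀ • z) - ∑ i : Fin 3,
        Set.indicator {w : ℂ | R₀ • w ∈ 𝒟 i} (fun _ => a i) z‖) ≤
      ∫ z in ball (0:ℂ) 1, f z :=
    integral_mono_of_nonneg (Filter.Eventually.of_forall fun z => norm_nonneg _) hfint hae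
  have hvolball : (volume (ball (0:ℂ) 1)).toReal = Real.pi := by
    rw [vol_ball_c 1 zero_le_one, ENNReal.toReal_ofReal (by positivity)]
    ring
  have hfval : (∫ z in ball (0:ℂ) 1, f z) =
      K * (volume E).toReal + Real.pi * (K * Real.exp (-(k * c0))) := by
    rw [hf, integral_add (hconst_int.indicator hEmeas) hconst_int2]
    congr 1
    · rw [setIntegral_indicator hEmeas, setIntegral_const, measureReal_def,
        Set.inter_eq_self_of_subset_right Set.inter_subset_left,
        smul_eq_mul, mul_comm]
    · rw [setIntegral_const, measureReal_def, smul_eq_mul, hvolball]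
  have hexp_tail : Real.exp (-(k * c0)) ≤ Ct * x := by
    have := hCt R₀ hR
    rw [hxd]
    rw [hc0, ← mul_assoc]
    exact this
  calc (∫ z in ball (0:ℂ) 1,
      ‖u (R₀ • z) - ∑ i : Fin 3,
        Set.indicator {w : ℂ | R₀ • w ∈ 𝒟 i} (fun _ => a i) z‖)
      ≤ ∫ z in ball (0:ℂ) 1, f z := hint
    _ = K * (volume E).toReal + Real.pi * (K * Real.exp (-(k * c0))) := hfval
    _ ≤ K * (Ce * x) + Real.pi * (K * (Ct * x)) := by
        apply add_le_add
        · exact mul_le_mul_of_nonneg_left hvolE hK.le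
        · apply mul_le_mul_of_nonneg_left _ Real.pi_pos.le
          exact mul_le_mul_of_nonneg_left hexp_tail hK.le
    _ = (K * Ce + Real.pi * (K * Ct)) * x := by ring


end
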